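/- Global asymptotic stability of the TB disease-free equilibrium (Theorem 3.2): let (S, T_L, T_I, T_T) : [0,∞) → ℝ⁴ be a continuously differentiable solution of the TB submodel with N(t) = S(t)+T_L(t)+T_I(t)+T_T(t), nonnegative initial conditions with N(0) > 0, and N(0) ≤ Λ/d. If βe·k1 < (d+r+dT)·(d+k1) (that is, the TB reproduction number evaluated at the disease-free population N = Λ/d is less than 1), then (S(t), T_L(t), T_I(t), T_T(t)) converges to (Λ/d, 0, 0, 0) as t → ∞. -/

import Mathlib

open Set Filter Real Topology

/-- Monotone on a convex set from pointwise `HasDerivAt` with nonneg derivative. -/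
lemma TB_monoOn {D : Set ℝ} (hD : Convex ℝ D) {x x' : ℝ → ℝ}
    (hx : ∀ t ∈ D, HasDerivAt x (x' t) t) (h0 : ∀ t ∈ D, 0 ≤ x' t) :
    MonotoneOn x D :=
  monotoneOn_of_hasDerivWithinAt_nonneg hD
    (fun t ht => (hx t ht).continuousAt.continuousWithinAt)
    (fun t ht => ((hx t (interior_subset ht)).hasDerivWithinAt))
    (fun t ht => h0 t (interior_subset ht))

/-- derivative of `t ↦ (x t - m) * exp (K * t)`. -/
lemma TB_hderiv_aux {x : ℝ → ℝ} {v m K t : ℝ} (hx : HasDerivAt x v t) :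
    HasDerivAt (fun s => (x s - m) * Real.exp (K * s))
      (Real.exp (K * t) * (v + K * (x t - m))) t := by
  have he : HasDerivAt (fun s : ℝ => Real.exp (K * s)) (Real.exp (K * t) * K) t := by
    simpa using ((hasDerivAt_id t).const_mul K).exp
  have := (hx.sub_const m).mul he
  refine this.congr_deriv ?_
  ring

/-- Comparison: if `x' ≥ c - K x` on `[a,b]` then `x t ≥ min (x a) (c/K)`. -/
lemma TB_lower {x g : ℝ → ℝ} {a b c K : ℝ} (hK : 0 < K)
    (hx : ∀ t ∈ Icc a b, HasDerivAt x (g t) t)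
    (hg : ∀ t ∈ Icc a b, c - K * x t ≤ g t) :
    ∀ t ∈ Icc a b, min (x a) (c / K) ≤ x t := by
  intro t ht
  have hab : a ≤ b := le_trans ht.1 ht.2
  have ha : a ∈ Icc a b := ⟨le_refl a, hab⟩
  have hmono : MonotoneOn (fun s => (x s - c / K) * Real.exp (K * s)) (Icc a b) := by
    apply TB_monoOn (convex_Icc a b) (fun s hs => TB_hderiv_aux (hx s hs))
    intro s hs
    have h1 := hg s hs
    have : 0 ≤ g s + K * (x s - c / K) := by
      have : K * (c / K) = c := by field_simp
      nlinarith
    positivity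
  have hm := hmono ha ht ht.1
  rcases le_or_gt (c / K) (x a) with hc | hc
  · -- x a ≥ c/K : then (x t - c/K) exp ≥ (x a - c/K) exp a ≥ 0
    have h2 : (0:ℝ) ≤ (x a - c / K) * Real.exp (K * a) := by
      have := sub_nonneg.2 hc; positivity
    have h3 : (0:ℝ) ≤ (x t - c / K) * Real.exp (K * t) := le_trans h2 hm
    have h4 : 0 ≤ x t - c / K := by nlinarith [Real.exp_pos (K * t)]
    have : c / K ≤ x t := by linarith
    exact le_trans (min_le_right _ _) this
  · -- x a < c/K : show x t ≥ x a
    have hexp : Real.exp (K * a) ≤ Real.exp (K * t) := by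
      apply Real.exp_le_exp.2
      nlinarith [ht.1]
    have h2 : (x a - c / K) * Real.exp (K * t) ≤ (x a - c / K) * Real.exp (K * a) := by
      apply mul_le_mul_of_nonpos_left hexp (by linarith)
    have h3 : (x a - c / K) * Real.exp (K * t) ≤ (x t - c / K) * Real.exp (K * t) :=
      le_trans h2 hm
    have h4 : x a - c / K ≤ x t - c / K :=
      le_of_mul_le_mul_right h3 (Real.exp_pos _)
    exact le_trans (min_le_left _ _) (by linarith)

/-- Exponential decay: `x' ≤ -c x` on `[0,∞)` gives `x t ≤ x 0 * exp (-c t)`. -/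
lemma TB_decay {x g : ℝ → ℝ} {c : ℝ}
    (hx : ∀ t ∈ Ici (0:ℝ), HasDerivAt x (g t) t)
    (hg : ∀ t ∈ Ici (0:ℝ), g t ≤ -c * x t) :
    ∀ t ∈ Ici (0:ℝ), x t ≤ x 0 * Real.exp (-c * t) := by
  intro t ht
  have hmono : MonotoneOn (fun s => (-x s - 0) * Real.exp (c * s)) (Ici (0:ℝ)) := by
    apply TB_monoOn (convex_Ici 0)
    · intro s hs
      exact TB_hderiv_aux (m := 0) (K := c) ((hx s hs).neg)
    · intro s hs
      have := hg s hs
      have h1 : 0 ≤ -g s + c * (-x s - 0) := by linarith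
      exact mul_nonneg (Real.exp_pos _).le h1
  have := hmono (self_mem_Ici) ht ht
  simp only [sub_zero] at this
  -- (-x 0) * exp 0 ≤ (-x t) * exp (c t)
  have hexp := Real.exp_pos (c * t)
  rw [mul_zero, Real.exp_zero, mul_one] at this
  -- so x t ≤ x 0 / exp(c t) = x 0 * exp(-c t)
  have h2 : x t * Real.exp (c * t) ≤ x 0 := by nlinarith
  have h3 : Real.exp (-c * t) = (Real.exp (c * t))⁻¹ := by
    rw [← Real.exp_neg]; ring_nf
  calc x t = x t * Real.exp (c * t) * (Real.exp (c * t))⁻¹ := by field_simp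
    _ ≤ x 0 * (Real.exp (c * t))⁻¹ := by
        apply mul_le_mul_of_nonneg_right h2 (by positivity)
    _ = x 0 * Real.exp (-c * t) := by rw [h3]

/-- Forced linear ODE: `x' = f - a x`, `f → L` implies `x → L / a`. -/
lemma TB_linear_limit {x f : ℝ → ℝ} {a L : ℝ} (ha : 0 < a)
    (hx : ∀ t ∈ Ici (0:ℝ), HasDerivAt x (f t - a * x t) t)
    (hf : Tendsto f atTop (nhds L)) :
    Tendsto x atTop (nhds (L / a)) := by
  rw [Metric.tendsto_atTop]
  intro ε hε
  -- find T with |f s - L| ≤ a ε / 3 for s ≥ T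
  obtain ⟨T₀, hT₀⟩ := (Metric.tendsto_atTop.1 hf) (a * ε / 3) (by positivity)
  set T := max T₀ 0 with hT
  have hTnn : (0:ℝ) ≤ T := le_max_right _ _
  have hfb : ∀ s ≥ T, |f s - L| ≤ a * ε / 3 := by
    intro s hs
    have := hT₀ s (le_trans (le_max_left _ _) hs)
    rw [Real.dist_eq] at this
    exact this.le
  -- g s = (x s - L/a) * exp (a s) satisfies g' = (f - L) exp(a s)
  set g : ℝ → ℝ := fun s => (x s - L / a) * Real.exp (a * s) with hgdef
  have hgd : ∀ s ∈ Ici T, HasDerivAt g (Real.exp (a * s) * (f s - L)) s := by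
    intro s hs
    have h1 := TB_hderiv_aux (m := L / a) (K := a) (hx s (le_trans hTnn hs))
    have ha' : a ≠ 0 := ne_of_gt ha
    have h2 : f s - a * x s + a * (x s - L / a) = f s - L := by
      field_simp
      ring
    rw [h2] at h1
    exact h1
  -- bound function B s = (ε/3) exp (a s)
  set B : ℝ → ℝ := fun s => (ε / 3 - 0) * Real.exp (a * s) with hBdef
  have hBd : ∀ s : ℝ, HasDerivAt B (Real.exp (a * s) * (0 + a * (ε / 3 - 0))) s := by
    intro s
    exact TB_hderiv_aux (x := fun _ => ε / 3) (v := 0) (m := 0) (K := a)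
      (hasDerivAt_const s (ε / 3))
  have hBnn : ∀ s : ℝ, 0 ≤ B s := by
    intro s; rw [hBdef]; have := Real.exp_pos (a*s); nlinarith
  have hm1 : MonotoneOn (fun u => B u - g u) (Ici T) := by
    apply TB_monoOn (convex_Ici T)
      (fun s hs => (hBd s).sub (hgd s hs))
    intro s hs
    have := hfb s hs
    have hab := abs_le.1 this
    have : 0 ≤ 0 + a * (ε / 3 - 0) - (f s - L) := by linarith
    nlinarith [Real.exp_pos (a * s)]
  have hm2 : MonotoneOn (fun u => B u + g u) (Ici T) := by
    apply TB_monoOn (convex_Ici T)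
      (fun s hs => (hBd s).add (hgd s hs))
    intro s hs
    have := hfb s hs
    have hab := abs_le.1 this
    have : 0 ≤ 0 + a * (ε / 3 - 0) + (f s - L) := by linarith
    nlinarith [Real.exp_pos (a * s)]
  -- |g t| ≤ |g T| + B t for t ≥ T
  have hkey : ∀ t ≥ T, |g t| ≤ |g T| + B t := by
    intro t ht
    have h1 := hm1 (self_mem_Ici) (mem_Ici.2 ht) ht
    have h2 := hm2 (self_mem_Ici) (mem_Ici.2 ht) ht
    simp only at h1 h2
    have hBT := hBnn T
    have hgT := le_abs_self (g T)
    have hgT' := neg_abs_le (g T)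
    rw [abs_le]
    constructor <;> linarith
  -- tail: |g T| * exp (-a t) → 0
  have hexp0 : Tendsto (fun t : ℝ => |g T| * Real.exp (-(a * t))) atTop (nhds 0) := by
    have h1 : Tendsto (fun t : ℝ => a * t) atTop atTop :=
      Tendsto.const_mul_atTop ha tendsto_id
    have h3 : Tendsto (fun t : ℝ => Real.exp (a * t)) atTop atTop :=
      Real.tendsto_exp_atTop.comp h1
    have h4 := h3.inv_tendsto_atTop
    have h5 : Tendsto (fun t : ℝ => Real.exp (-(a * t))) atTop (nhds 0) := by
      simpa [Real.exp_neg, Pi.inv_def] using h4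
    simpa using h5.const_mul |g T|
  have hev : ∀ᶠ t in atTop, |g T| * Real.exp (-(a * t)) < ε / 3 :=
    hexp0.eventually_lt_const (by positivity)
  obtain ⟨T₂, hT₂⟩ := (hev.and (eventually_ge_atTop T)).exists_forall_of_atTop
  refine ⟨T₂, fun t ht => ?_⟩
  obtain ⟨hlt, hge⟩ := hT₂ t ht
  have hk := hkey t hge
  have hexpt := Real.exp_pos (a * t)
  have habs : |x t - L / a| * Real.exp (a * t) = |g t| := by
    rw [hgdef]
    rw [abs_mul, abs_of_pos hexpt]
  have hBt : B t = (ε / 3) * Real.exp (a * t) := by rw [hBdef]; ring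
  have hinv : Real.exp (-(a * t)) = (Real.exp (a * t))⁻¹ := Real.exp_neg _
  rw [Real.dist_eq]
  -- |x t - L/a| ≤ |g T| * exp(-(a t)) + ε/3 < 2ε/3 < ε
  have h6 : |x t - L / a| ≤ |g T| * Real.exp (-(a * t)) + ε / 3 := by
    rw [hinv]
    have h5 : |x t - L / a| * Real.exp (a * t) ≤ |g T| + (ε / 3) * Real.exp (a * t) := by
      rw [habs, ← hBt]; exact hk
    have h7 : (Real.exp (a * t))⁻¹ * Real.exp (a * t) = 1 :=
      inv_mul_cancel₀ (ne_of_gt hexpt)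
    by_contra hcon
    push_neg at hcon
    have h8 := mul_lt_mul_of_pos_right hcon hexpt
    have h9 : (|g T| * (Real.exp (a * t))⁻¹ + ε / 3) * Real.exp (a * t)
        = |g T| + ε / 3 * Real.exp (a * t) := by
      field_simp
    rw [h9] at h8
    linarith [h5, h8]
  linarith

/-- If `g` has a minimum at the right endpoint `τ` over `[0, τ]`, its derivative there
is nonpositive. -/
lemma TB_left_slope {g : ℝ → ℝ} {g' τ : ℝ} (h : HasDerivAt g g' τ) (hτ : 0 < τ)
    (hmin : ∀ s, 0 ≤ s → s < τ → g τ ≤ g s) : g' ≤ 0 := by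
  have hslope := hasDerivAt_iff_tendsto_slope.1 h
  have hle : Tendsto (slope g τ) (𝓝[<] τ) (𝓝 g') :=
    hslope.mono_left (nhdsWithin_mono τ (fun s hs => ne_of_lt hs))
  have hev : ∀ᶠ s in 𝓝[<] τ, slope g τ s ≤ 0 := by
    have hIoo : Ioo 0 τ ∈ 𝓝[<] τ := Ioo_mem_nhdsLT_of_mem ⟨hτ, le_refl τ⟩
    filter_upwards [hIoo] with s hs
    rw [slope_def_field]
    have h1 : 0 ≤ g s - g τ := sub_nonneg.2 (hmin s hs.1.le hs.2)
    have h2 : s - τ ≤ 0 := by linarith [hs.2]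
    exact div_nonpos_of_nonneg_of_nonpos h1 h2
  exact le_of_tendsto hle hev

set_option maxHeartbeats 1000000 in
/-- Nonnegativity of solution components of the TB submodel. -/
lemma TB_nonneg (Lam d dT k1 r r1 be : ℝ)
    (hLam : 0 < Lam) (hd : 0 < d) (hdT : 0 < dT) (hk1 : 0 < k1)
    (hr : 0 < r) (hr1 : 0 < r1) (hbe : 0 < be)
    (S TL TI TT N : ℝ → ℝ)
    (hN : ∀ t, N t = S t + TL t + TI t + TT t)
    (hS : ∀ t ≥ (0 : ℝ), HasDerivAt S (Lam - be * S t * TI t / N t - d * S t + r1 * TT t) t)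
    (hTL : ∀ t ≥ (0 : ℝ), HasDerivAt TL (be * S t * TI t / N t - (d + k1) * TL t) t)
    (hTI : ∀ t ≥ (0 : ℝ), HasDerivAt TI (k1 * TL t - (d + dT + r) * TI t) t)
    (hTT : ∀ t ≥ (0 : ℝ), HasDerivAt TT (r * TI t - (r1 + d + dT) * TT t) t)
    (h0 : 0 ≤ S 0 ∧ 0 ≤ TL 0 ∧ 0 ≤ TI 0 ∧ 0 ≤ TT 0)
    (hN0 : 0 < N 0) :
    ∀ t ≥ (0:ℝ), 0 ≤ S t ∧ 0 ≤ TL t ∧ 0 ≤ TI t ∧ 0 ≤ TT t := by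
  -- derivative of N
  have hNfun : (fun t => S t + TL t + TI t + TT t) = N := (funext hN).symm
  have hDN : ∀ t ≥ (0:ℝ), HasDerivAt N (Lam - d * N t - dT * (TI t + TT t)) t := by
    intro s hs
    have h := (((hS s hs).add (hTL s hs)).add (hTI s hs)).add (hTT s hs)
    rw [show S + TL + TI + TT = N from hNfun] at h
    refine h.congr_deriv ?_
    rw [hN s]
    ring
  intro T hT
  -- continuity and bounds on [0,T]
  have hScont : ContinuousOn S (Icc 0 T) :=
    fun s hs => (hS s hs.1).continuousAt.continuousWithinAt
  have hTIcont : ContinuousOn TI (Icc 0 T) :=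
    fun s hs => (hTI s hs.1).continuousAt.continuousWithinAt
  obtain ⟨C1, hC1⟩ := isCompact_Icc.exists_bound_of_continuousOn hScont
  obtain ⟨C2, hC2⟩ := isCompact_Icc.exists_bound_of_continuousOn hTIcont
  set M0 : ℝ := max (max C1 C2) 0 with hM0def
  have hM0nn : 0 ≤ M0 := le_max_right _ _
  have hM0S : ∀ s ∈ Icc (0:ℝ) T, |S s| ≤ M0 :=
    fun s hs => le_trans (hC1 s hs) (le_trans (le_max_left _ _) (le_max_left _ _))
  have hM0TI : ∀ s ∈ Icc (0:ℝ) T, |TI s| ≤ M0 :=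
    fun s hs => le_trans (hC2 s hs) (le_trans (le_max_right _ _) (le_max_left _ _))
  -- positive lower barrier for N
  set n₀ : ℝ := min (N 0) ((Lam / 2) / (d + dT)) with hn₀def
  have hn₀pos : 0 < n₀ := lt_min hN0 (by positivity)
  -- the exponent constant
  set M : ℝ := 1 + k1 + r + be * M0 / n₀ with hMdef
  have hMpos : 0 < M := by
    rw [hMdef]
    have : 0 ≤ be * M0 / n₀ := by positivity
    linarith
  -- the allowed perturbation size
  set δ : ℝ := min (Lam / (4 * dT)) (Lam / (2 * (be * M0 / n₀ + r1 + 1))) with hδdef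
  have hδpos : 0 < δ := by
    apply lt_min (by positivity)
    have : 0 ≤ be * M0 / n₀ := by positivity
    positivity
  have hδ1 : 2 * dT * δ ≤ Lam / 2 := by
    have h1 : δ ≤ Lam / (4 * dT) := min_le_left _ _
    rw [le_div_iff₀ (by positivity)] at h1
    linarith
  have hδ2 : δ * (be * M0 / n₀ + r1) ≤ Lam / 2 := by
    have h1 : δ ≤ Lam / (2 * (be * M0 / n₀ + r1 + 1)) := min_le_right _ _
    have h2 : 0 ≤ be * M0 / n₀ := by positivity
    rw [le_div_iff₀ (by positivity)] at h1
    nlinarith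
  set ε₀ : ℝ := δ / Real.exp (M * T) with hε₀def
  have hε₀pos : 0 < ε₀ := by positivity
  -- main claim: strict barrier for every small ε
  have hclaim : ∀ ε, 0 < ε → ε ≤ ε₀ → ∀ s ∈ Icc (0:ℝ) T,
      -(ε * Real.exp (M * s)) < S s ∧ -(ε * Real.exp (M * s)) < TL s ∧
      -(ε * Real.exp (M * s)) < TI s ∧ -(ε * Real.exp (M * s)) < TT s := by
    intro ε hε hεle
    set gS : ℝ → ℝ := fun s => S s + ε * Real.exp (M * s) with hgSdef
    set gL : ℝ → ℝ := fun s => TL s + ε * Real.exp (M * s) with hgLdef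
    set gI : ℝ → ℝ := fun s => TI s + ε * Real.exp (M * s) with hgIdef
    set gT : ℝ → ℝ := fun s => TT s + ε * Real.exp (M * s) with hgTdef
    set F : ℝ → ℝ := fun s => min (min (gS s) (gL s)) (min (gI s) (gT s)) with hFdef
    have hFle : ∀ s, F s ≤ gS s ∧ F s ≤ gL s ∧ F s ≤ gI s ∧ F s ≤ gT s := by
      intro s
      exact ⟨le_trans (min_le_left _ _) (min_le_left _ _),
        le_trans (min_le_left _ _) (min_le_right _ _),
        le_trans (min_le_right _ _) (min_le_left _ _),
        le_trans (min_le_right _ _) (min_le_right _ _)⟩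
    suffices hF : ∀ s ∈ Icc (0:ℝ) T, 0 < F s by
      intro s hs
      have h1 := hF s hs
      have h2 := hFle s
      rw [hgSdef] at h2   -- no-op, just keep names
      refine ⟨by have := lt_of_lt_of_le h1 h2.1; simp only [hgSdef] at this; linarith,
        by have := lt_of_lt_of_le h1 h2.2.1; simp only [hgLdef] at this; linarith,
        by have := lt_of_lt_of_le h1 h2.2.2.1; simp only [hgIdef] at this; linarith,
        by have := lt_of_lt_of_le h1 h2.2.2.2; simp only [hgTdef] at this; linarith⟩
    by_contra hbad
    push_neg at hbad
    obtain ⟨τ₀, hτ₀mem, hτ₀⟩ := hbad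
    -- the bad set and its infimum
    set B : Set ℝ := {s | s ∈ Icc (0:ℝ) T ∧ F s ≤ 0} with hBdef
    have hBne : B.Nonempty := ⟨τ₀, hτ₀mem, hτ₀⟩
    have hBbdd : BddBelow B := ⟨0, fun x hx => hx.1.1⟩
    have hexpc : Continuous fun s : ℝ => ε * Real.exp (M * s) := by
      exact continuous_const.mul (Real.continuous_exp.comp (continuous_const.mul continuous_id))
    have hXc : ∀ X : ℝ → ℝ, (∀ t ≥ (0:ℝ), ContinuousAt X t) →
        ContinuousOn (fun s => X s + ε * Real.exp (M * s)) (Icc 0 T) :=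
      fun X hX s hs => ((hX s hs.1).add hexpc.continuousAt).continuousWithinAt
    have hcS := hXc S (fun t ht => (hS t ht).continuousAt)
    have hcL := hXc TL (fun t ht => (hTL t ht).continuousAt)
    have hcI := hXc TI (fun t ht => (hTI t ht).continuousAt)
    have hcT := hXc TT (fun t ht => (hTT t ht).continuousAt)
    have hFcontOn : ContinuousOn F (Icc 0 T) := (hcS.inf hcL).inf (hcI.inf hcT)
    have hBclosed : IsClosed B := by
      have : B = Icc (0:ℝ) T ∩ F ⁻¹' Iic 0 := by
        ext s; simp [hBdef, Set.mem_inter_iff, Set.mem_preimage]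
      rw [this]
      exact hFcontOn.preimage_isClosed_of_isClosed isClosed_Icc isClosed_Iic
    set τ : ℝ := sInf B with hτdef
    have hτB : τ ∈ B := hBclosed.csInf_mem hBne hBbdd
    have hτIcc : τ ∈ Icc (0:ℝ) T := hτB.1
    have hFτle : F τ ≤ 0 := hτB.2
    have hgpos0 : 0 < F 0 := by
      have he0 : (0:ℝ) < ε * Real.exp (M * 0) := by positivity
      have e1 : 0 < gS 0 := by rw [hgSdef]; dsimp only; linarith [h0.1]
      have e2 : 0 < gL 0 := by rw [hgLdef]; dsimp only; linarith [h0.2.1]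
      have e3 : 0 < gI 0 := by rw [hgIdef]; dsimp only; linarith [h0.2.2.1]
      have e4 : 0 < gT 0 := by rw [hgTdef]; dsimp only; linarith [h0.2.2.2]
      rw [hFdef]
      exact lt_min (lt_min e1 e2) (lt_min e3 e4)
    have hτpos : 0 < τ := by
      rcases lt_or_eq_of_le hτIcc.1 with h | h
      · exact h
      · exfalso; rw [← h] at hFτle; linarith
    have hbefore : ∀ s, 0 ≤ s → s < τ → 0 < F s := by
      intro s h1 h2
      by_contra h3
      push_neg at h3
      have hsB : s ∈ B := ⟨⟨h1, le_trans h2.le hτIcc.2⟩, h3⟩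
      have := csInf_le hBbdd hsB
      rw [← hτdef] at this
      linarith
    have hFcτ : ContinuousAt F τ := by
      have h1 : ContinuousAt gS τ := ((hS τ hτIcc.1).continuousAt).add hexpc.continuousAt
      have h2 : ContinuousAt gL τ := ((hTL τ hτIcc.1).continuousAt).add hexpc.continuousAt
      have h3 : ContinuousAt gI τ := ((hTI τ hτIcc.1).continuousAt).add hexpc.continuousAt
      have h4 : ContinuousAt gT τ := ((hTT τ hτIcc.1).continuousAt).add hexpc.continuousAt
      exact (h1.inf h2).inf (h3.inf h4)
    have hFτ0 : F τ = 0 := by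
      refine le_antisymm hFτle ?_
      have hJ : Tendsto F (𝓝[<] τ) (𝓝 (F τ)) :=
        (hFcτ.continuousWithinAt).tendsto
      refine ge_of_tendsto hJ ?_
      filter_upwards [Ioo_mem_nhdsLT_of_mem ⟨hτpos, le_refl τ⟩] with s hs
      exact (hbefore s hs.1.le hs.2).le
    -- each barrier is nonnegative at τ
    have hgSge : 0 ≤ gS τ := hFτ0 ▸ (hFle τ).1
    have hgLge : 0 ≤ gL τ := hFτ0 ▸ (hFle τ).2.1
    have hgIge : 0 ≤ gI τ := hFτ0 ▸ (hFle τ).2.2.1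
    have hgTge : 0 ≤ gT τ := hFτ0 ▸ (hFle τ).2.2.2
    have hτT : τ ≤ T := hτIcc.2
    have hEδ : ∀ s ∈ Icc (0:ℝ) τ, ε * Real.exp (M * s) ≤ δ := by
      intro s hs
      have h1 : Real.exp (M * s) ≤ Real.exp (M * T) :=
        Real.exp_le_exp.2 (mul_le_mul_of_nonneg_left (le_trans hs.2 hτT) hMpos.le)
      have h2 : ε * Real.exp (M * s) ≤ ε₀ * Real.exp (M * T) :=
        mul_le_mul hεle h1 (Real.exp_pos _).le hε₀pos.le
      have h3 : ε₀ * Real.exp (M * T) = δ := by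
        rw [hε₀def]; field_simp
      linarith
    have hbd : ∀ s ∈ Icc (0:ℝ) τ, -δ ≤ S s ∧ -δ ≤ TL s ∧ -δ ≤ TI s ∧ -δ ≤ TT s := by
      intro s hs
      have hEs := hEδ s hs
      rcases lt_or_eq_of_le hs.2 with h | h
      · have hFs := hbefore s hs.1 h
        have h4 := hFle s
        have e1 := lt_of_lt_of_le hFs h4.1
        have e2 := lt_of_lt_of_le hFs h4.2.1
        have e3 := lt_of_lt_of_le hFs h4.2.2.1
        have e4 := lt_of_lt_of_le hFs h4.2.2.2
        rw [hgSdef] at e1; rw [hgLdef] at e2; rw [hgIdef] at e3; rw [hgTdef] at e4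
        dsimp only at e1 e2 e3 e4
        exact ⟨by linarith, by linarith, by linarith, by linarith⟩
      · rw [h] at hEs ⊢
        have e1 := hgSge; have e2 := hgLge; have e3 := hgIge; have e4 := hgTge
        rw [hgSdef] at e1; rw [hgLdef] at e2; rw [hgIdef] at e3; rw [hgTdef] at e4
        dsimp only at e1 e2 e3 e4
        exact ⟨by linarith, by linarith, by linarith, by linarith⟩
    have hNlow : ∀ s ∈ Icc (0:ℝ) τ, n₀ ≤ N s := by
      have hineq : ∀ s ∈ Icc (0:ℝ) τ,
          Lam / 2 - (d + dT) * N s ≤ Lam - d * N s - dT * (TI s + TT s) := by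
        intro s hs
        obtain ⟨b1, b2, b3, b4⟩ := hbd s hs
        have e1 : dT * (TI s + TT s) = dT * N s - dT * S s - dT * TL s := by
          rw [hN s]; ring
        have e2 := mul_le_mul_of_nonneg_left b1 hdT.le
        have e3 := mul_le_mul_of_nonneg_left b2 hdT.le
        linarith only [e1, e2, e3, hδ1]
      have hres := TB_lower (a := 0) (b := τ) (c := Lam / 2) (K := d + dT)
        (by positivity) (fun s hs => hDN s hs.1) hineq
      intro s hs
      have h5 := hres s hs
      rw [hn₀def]
      exact h5
    -- facts at τ
    set E : ℝ := ε * Real.exp (M * τ) with hEdef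
    have hEpos : 0 < E := by rw [hEdef]; positivity
    have hEδτ : E ≤ δ := hEδ τ ⟨hτIcc.1, le_refl τ⟩
    have hNτ : n₀ ≤ N τ := hNlow τ ⟨hτIcc.1, le_refl τ⟩
    have hNτpos : 0 < N τ := lt_of_lt_of_le hn₀pos hNτ
    have hSb := abs_le.1 (hM0S τ hτIcc)
    have hTIb := abs_le.1 (hM0TI τ hτIcc)
    have hSτge : -E ≤ S τ := by
      have := hgSge; rw [hgSdef] at this; dsimp only at this; rw [hEdef]; linarith
    have hTLτge : -E ≤ TL τ := by
      have := hgLge; rw [hgLdef] at this; dsimp only at this; rw [hEdef]; linarith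
    have hTIτge : -E ≤ TI τ := by
      have := hgIge; rw [hgIdef] at this; dsimp only at this; rw [hEdef]; linarith
    have hTTτge : -E ≤ TT τ := by
      have := hgTge; rw [hgTdef] at this; dsimp only at this; rw [hEdef]; linarith
    have hq0 : 0 ≤ be * M0 / n₀ := by positivity
    have hExpD : HasDerivAt (fun s => ε * Real.exp (M * s))
        (ε * (Real.exp (M * τ) * (M * 1))) τ :=
      (((hasDerivAt_id τ).const_mul M).exp).const_mul ε
    have hEM : ε * (Real.exp (M * τ) * (M * 1)) = E * (1 + k1 + r + be * M0 / n₀) := by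
      rw [hEdef, hMdef]; ring
    rw [mul_add] at hδ2
    -- one of the four components vanishes at τ
    have hzero : gS τ = 0 ∨ gL τ = 0 ∨ gI τ = 0 ∨ gT τ = 0 := by
      by_contra hcon
      push_neg at hcon
      obtain ⟨a1, a2, a3, a4⟩ := hcon
      have hFpos : 0 < F τ := by
        rw [hFdef]
        exact lt_min (lt_min (lt_of_le_of_ne hgSge (Ne.symm a1))
          (lt_of_le_of_ne hgLge (Ne.symm a2)))
          (lt_min (lt_of_le_of_ne hgIge (Ne.symm a3)) (lt_of_le_of_ne hgTge (Ne.symm a4)))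
      linarith
    -- minimum principle at τ
    have hminp : ∀ (X : ℝ → ℝ) (v : ℝ), HasDerivAt X v τ →
        X τ + ε * Real.exp (M * τ) = 0 →
        (∀ s, F s ≤ X s + ε * Real.exp (M * s)) →
        v + ε * (Real.exp (M * τ) * (M * 1)) ≤ 0 := by
      intro X v hX hXτ hFX
      apply TB_left_slope (hX.add hExpD) hτpos
      intro s h1 h2
      have h3 := hbefore s h1 h2
      have h4 := hFX s
      show X τ + ε * Real.exp (M * τ) ≤ X s + ε * Real.exp (M * s)
      linarith
    rcases hzero with hz | hz | hz | hz
    · -- S vanishes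
      have hz' : S τ = -E := by
        rw [hgSdef] at hz; dsimp only at hz; rw [hEdef]; linarith
      have hle0 := hminp S _ (hS τ hτIcc.1)
        (by rw [hgSdef] at hz; dsimp only at hz; exact hz) (fun s => (hFle s).1)
      -- bound the infection term
      have h1 : |be * S τ * TI τ / N τ| = be * |S τ| * |TI τ| / N τ := by
        rw [abs_div, abs_of_pos hNτpos, abs_mul, abs_mul, abs_of_pos hbe]
      have hSabs : |S τ| = E := by rw [hz', abs_neg, abs_of_pos hEpos]
      have h2 : be * |S τ| * |TI τ| / N τ ≤ be * E * M0 / n₀ := by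
        rw [hSabs]
        apply div_le_div₀ (by positivity) ?_ hn₀pos hNτ
        exact mul_le_mul_of_nonneg_left (hM0TI τ hτIcc) (by positivity)
      have h3' : |be * S τ * TI τ / N τ| ≤ be * E * M0 / n₀ := by rw [h1]; exact h2
      have h3 := abs_le.1 h3'
      have h4 : be * E * M0 / n₀ = E * (be * M0 / n₀) := by ring
      have h5 : E * (be * M0 / n₀) ≤ δ * (be * M0 / n₀) :=
        mul_le_mul_of_nonneg_right hEδτ hq0
      have h6 : r1 * (-E) ≤ r1 * TT τ := mul_le_mul_of_nonneg_left hTTτge hr1.le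
      have h7 : r1 * E ≤ r1 * δ := mul_le_mul_of_nonneg_left hEδτ hr1.le
      have h8 : d * S τ = -(d * E) := by rw [hz']; ring
      rw [hEM] at hle0
      have h10 : E * (1 + k1 + r + be * M0 / n₀)
          = E + E * k1 + E * r + E * (be * M0 / n₀) := by ring
      have hp1 : 0 ≤ E * k1 := mul_nonneg hEpos.le hk1.le
      have hp2 : 0 ≤ E * r := mul_nonneg hEpos.le hr.le
      have hp3 : 0 ≤ d * E := mul_nonneg hd.le hEpos.le
      have hp5 : 0 ≤ δ * (be * M0 / n₀) := mul_nonneg hδpos.le hq0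
      linarith only [hle0, h3.2, h4, h5, h6, h7, h8, h10, hδ2, hLam, hp1, hp2, hp3, hp5, hEpos]
    · -- TL vanishes
      have hz' : TL τ = -E := by
        rw [hgLdef] at hz; dsimp only at hz; rw [hEdef]; linarith
      have hle0 := hminp TL _ (hTL τ hτIcc.1)
        (by rw [hgLdef] at hz; dsimp only at hz; exact hz) (fun s => (hFle s).2.1)
      have hSTI : -(E * M0) ≤ S τ * TI τ := by
        rcases le_or_gt 0 (TI τ) with h | h
        · linarith only [mul_nonneg (show 0 ≤ S τ + E by linarith) h,
            mul_nonneg hEpos.le (show 0 ≤ M0 - TI τ by linarith [hTIb.2])]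
        · linarith only [mul_nonneg (show 0 ≤ M0 - S τ by linarith [hSb.2])
            (show 0 ≤ -TI τ by linarith),
            mul_nonneg hM0nn (show 0 ≤ TI τ + E by linarith)]
      have hd1 : -(E * M0) / N τ ≤ S τ * TI τ / N τ :=
        (div_le_div_iff_of_pos_right hNτpos).2 hSTI
      have hd2 : E * M0 / N τ ≤ E * M0 / n₀ :=
        div_le_div_of_nonneg_left (by positivity) hn₀pos hNτ
      have hd3 : -(E * M0) / N τ = -(E * M0 / N τ) := by ring
      have hd4 : be * S τ * TI τ / N τ = be * (S τ * TI τ / N τ) := by ring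
      have hd5 : -(E * (be * M0 / n₀)) ≤ be * (S τ * TI τ / N τ) := by
        have h9 : -(E * M0 / n₀) ≤ S τ * TI τ / N τ := by linarith
        have h11 := mul_le_mul_of_nonneg_left h9 hbe.le
        have h12 : be * -(E * M0 / n₀) = -(E * (be * M0 / n₀)) := by ring
        linarith only [h11, h12]
      have h8 : (d + k1) * TL τ = -((d + k1) * E) := by rw [hz']; ring
      rw [hEM] at hle0
      have h10 : E * (1 + k1 + r + be * M0 / n₀)
          = E + E * k1 + E * r + E * (be * M0 / n₀) := by ring
      have hp1 : 0 ≤ E * k1 := mul_nonneg hEpos.le hk1.le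
      have hp2 : 0 ≤ E * r := mul_nonneg hEpos.le hr.le
      have hp3 : 0 ≤ (d + k1) * E := mul_nonneg (by linarith) hEpos.le
      linarith only [hle0, hd4, hd5, h8, h10, hp1, hp2, hp3, hEpos]
    · -- TI vanishes
      have hz' : TI τ = -E := by
        rw [hgIdef] at hz; dsimp only at hz; rw [hEdef]; linarith
      have hle0 := hminp TI _ (hTI τ hτIcc.1)
        (by rw [hgIdef] at hz; dsimp only at hz; exact hz) (fun s => (hFle s).2.2.1)
      have h6 : k1 * (-E) ≤ k1 * TL τ := mul_le_mul_of_nonneg_left hTLτge hk1.le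
      have h8 : (d + dT + r) * TI τ = -((d + dT + r) * E) := by rw [hz']; ring
      rw [hEM] at hle0
      have h10 : E * (1 + k1 + r + be * M0 / n₀)
          = E + E * k1 + E * r + E * (be * M0 / n₀) := by ring
      have hp2 : 0 ≤ E * r := mul_nonneg hEpos.le hr.le
      have hp3 : 0 ≤ (d + dT + r) * E := mul_nonneg (by linarith) hEpos.le
      have hp4 : 0 ≤ E * (be * M0 / n₀) := mul_nonneg hEpos.le hq0
      linarith only [hle0, h6, h8, h10, hp2, hp3, hp4, hEpos]
    · -- TT vanishes
      have hz' : TT τ = -E := by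
        rw [hgTdef] at hz; dsimp only at hz; rw [hEdef]; linarith
      have hle0 := hminp TT _ (hTT τ hτIcc.1)
        (by rw [hgTdef] at hz; dsimp only at hz; exact hz) (fun s => (hFle s).2.2.2)
      have h6 : r * (-E) ≤ r * TI τ := mul_le_mul_of_nonneg_left hTIτge hr.le
      have h8 : (r1 + d + dT) * TT τ = -((r1 + d + dT) * E) := by rw [hz']; ring
      rw [hEM] at hle0
      have h10 : E * (1 + k1 + r + be * M0 / n₀)
          = E + E * k1 + E * r + E * (be * M0 / n₀) := by ring
      have hp1 : 0 ≤ E * k1 := mul_nonneg hEpos.le hk1.le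
      have hp3 : 0 ≤ (r1 + d + dT) * E := mul_nonneg (by linarith) hEpos.le
      have hp4 : 0 ≤ E * (be * M0 / n₀) := mul_nonneg hEpos.le hq0
      linarith only [hle0, h6, h8, h10, hp1, hp3, hp4, hEpos]
  -- let ε → 0
  have hnn : ∀ X : ℝ → ℝ,
      (∀ ε, 0 < ε → ε ≤ ε₀ → ∀ s ∈ Icc (0:ℝ) T, -(ε * Real.exp (M * s)) < X s) →
      0 ≤ X T := by
    intro X hX
    by_contra hneg
    push_neg at hneg
    have hTmem : T ∈ Icc (0:ℝ) T := ⟨hT, le_refl T⟩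
    set ε : ℝ := min ε₀ (-(X T) / (2 * Real.exp (M * T))) with hεdef
    have hεpos : 0 < ε := lt_min hε₀pos (div_pos (by linarith) (by positivity))
    have h1 := hX ε hεpos (min_le_left _ _) T hTmem
    have h2 : ε ≤ -(X T) / (2 * Real.exp (M * T)) := min_le_right _ _
    rw [le_div_iff₀ (by positivity)] at h2
    linarith only [h1, h2, hneg]
  refine ⟨hnn S ?_, hnn TL ?_, hnn TI ?_, hnn TT ?_⟩ <;>
    · intro ε h1 h2 s hs
      have := hclaim ε h1 h2 s hs
      tauto

lemma TB_exp_tendsto (C c : ℝ) (hc : 0 < c) :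
    Tendsto (fun t : ℝ => C * Real.exp (-c * t)) atTop (nhds 0) := by
  have h1 : Tendsto (fun t : ℝ => c * t) atTop atTop :=
    Tendsto.const_mul_atTop hc tendsto_id
  have h3 : Tendsto (fun t : ℝ => Real.exp (c * t)) atTop atTop :=
    Real.tendsto_exp_atTop.comp h1
  have h4 := h3.inv_tendsto_atTop
  have h5 : Tendsto (fun t : ℝ => Real.exp (-(c * t))) atTop (nhds 0) := by
    simpa [Real.exp_neg, Pi.inv_def] using h4
  have h6 := h5.const_mul C
  simpa [neg_mul] using h6

/-- Global asymptotic stability of the TB disease-free equilibrium (Theorem 3.2):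
a nonnegative solution of the TB submodel with total population `N(t) = S+T_L+T_I+T_T`,
`0 < N 0 ≤ Λ/d`, converges to `(Λ/d, 0, 0, 0)` provided the reproduction number at the
disease-free population is less than one, i.e. `βe·k1 < (d+r+dT)·(d+k1)`. -/
theorem TB_DFE_global_stability (Lam d dT k1 r r1 be : ℝ)
    (hLam : 0 < Lam) (hd : 0 < d) (hdT : 0 < dT) (hk1 : 0 < k1)
    (hr : 0 < r) (hr1 : 0 < r1) (hbe : 0 < be)
    (S TL TI TT N : ℝ → ℝ)
    (hN : ∀ t, N t = S t + TL t + TI t + TT t)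
    (hS : ∀ t ≥ (0 : ℝ), HasDerivAt S (Lam - be * S t * TI t / N t - d * S t + r1 * TT t) t)
    (hTL : ∀ t ≥ (0 : ℝ), HasDerivAt TL (be * S t * TI t / N t - (d + k1) * TL t) t)
    (hTI : ∀ t ≥ (0 : ℝ), HasDerivAt TI (k1 * TL t - (d + dT + r) * TI t) t)
    (hTT : ∀ t ≥ (0 : ℝ), HasDerivAt TT (r * TI t - (r1 + d + dT) * TT t) t)
    (h0 : 0 ≤ S 0 ∧ 0 ≤ TL 0 ∧ 0 ≤ TI 0 ∧ 0 ≤ TT 0)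
    (hN0 : 0 < N 0) (hN0le : N 0 ≤ Lam / d)
    (hR : be * k1 < (d + r + dT) * (d + k1)) :
    Filter.Tendsto S Filter.atTop (nhds (Lam / d)) ∧
    Filter.Tendsto TL Filter.atTop (nhds 0) ∧
    Filter.Tendsto TI Filter.atTop (nhds 0) ∧
    Filter.Tendsto TT Filter.atTop (nhds 0) := by
  have hpos := TB_nonneg Lam d dT k1 r r1 be hLam hd hdT hk1 hr hr1 hbe
    S TL TI TT N hN hS hTL hTI hTT h0 hN0
  have hNfun : (fun t => S t + TL t + TI t + TT t) = N := (funext hN).symm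
  have hDN : ∀ t ≥ (0:ℝ), HasDerivAt N (Lam - d * N t - dT * (TI t + TT t)) t := by
    intro s hs
    have h := (((hS s hs).add (hTL s hs)).add (hTI s hs)).add (hTT s hs)
    rw [show S + TL + TI + TT = N from hNfun] at h
    refine h.congr_deriv ?_
    rw [hN s]
    ring
  -- N bounded below
  set n₁ : ℝ := min (N 0) (Lam / (d + dT)) with hn₁def
  have hn₁pos : 0 < n₁ := lt_min hN0 (by positivity)
  have hNlow : ∀ t ≥ (0:ℝ), n₁ ≤ N t := by
    intro t ht
    have hineq : ∀ s ∈ Icc (0:ℝ) t,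
        Lam - (d + dT) * N s ≤ Lam - d * N s - dT * (TI s + TT s) := by
      intro s hs
      obtain ⟨p1, p2, p3, p4⟩ := hpos s hs.1
      have e1 : dT * (TI s + TT s) = dT * N s - dT * S s - dT * TL s := by
        rw [hN s]; ring
      have e2 := mul_le_mul_of_nonneg_left p1 hdT.le
      have e3 := mul_le_mul_of_nonneg_left p2 hdT.le
      linarith only [e1, e2, e3]
    have hres := TB_lower (a := 0) (b := t) (c := Lam) (K := d + dT)
      (by positivity) (fun s hs => hDN s hs.1) hineq t ⟨ht, le_refl t⟩
    rw [hn₁def]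
    exact hres
  -- Lyapunov constants
  have hp : (0:ℝ) < d + dT + r := by linarith
  have hq : (0:ℝ) < d + k1 := by linarith
  set b : ℝ := (be / (d + dT + r) + (d + k1) / k1) / 2 with hbdef
  have hlt : be / (d + dT + r) < (d + k1) / k1 := by
    rw [div_lt_div_iff₀ hp hk1]; linarith only [hR, mul_comm (d + r + dT) (d + k1),
      show (d + r + dT) * (d + k1) = (d + k1) * (d + dT + r) from by ring]
  have hbpos : 0 < b := by rw [hbdef]; positivity
  have hb1 : be < b * (d + dT + r) := by
    have h1 : be / (d + dT + r) < b := by rw [hbdef]; linarith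
    calc be = be / (d + dT + r) * (d + dT + r) := by field_simp
    _ < b * (d + dT + r) := mul_lt_mul_of_pos_right h1 hp
  have hb2 : b * k1 < d + k1 := by
    have hblt : b < (d + k1) / k1 := by rw [hbdef]; linarith
    rw [lt_div_iff₀ hk1] at hblt
    exact hblt
  set c : ℝ := min ((d + k1) - b * k1) ((b * (d + dT + r) - be) / b) with hcdef
  have hcpos : 0 < c := lt_min (by linarith) (div_pos (by linarith) hbpos)
  have hc1 : c ≤ (d + k1) - b * k1 := min_le_left _ _
  have hc2 : c * b ≤ b * (d + dT + r) - be := by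
    have h1 : c ≤ (b * (d + dT + r) - be) / b := min_le_right _ _
    rw [le_div_iff₀ hbpos] at h1
    exact h1
  -- Lyapunov function
  set V : ℝ → ℝ := fun t => TL t + b * TI t with hVdef
  set DV : ℝ → ℝ := fun t =>
    (be * S t * TI t / N t - (d + k1) * TL t) + b * (k1 * TL t - (d + dT + r) * TI t)
    with hDVdef
  have hVd : ∀ t ∈ Ici (0:ℝ), HasDerivAt V (DV t) t :=
    fun t ht => (hTL t ht).add ((hTI t ht).const_mul b)
  have hVineq : ∀ t ∈ Ici (0:ℝ), DV t ≤ -c * V t := by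
    intro t ht
    obtain ⟨p1, p2, p3, p4⟩ := hpos t ht
    have hNt : n₁ ≤ N t := hNlow t ht
    have hNtpos : 0 < N t := lt_of_lt_of_le hn₁pos hNt
    have hfrac : be * S t * TI t / N t ≤ be * TI t := by
      rw [div_le_iff₀ hNtpos]
      have hSle : S t ≤ N t := by rw [hN t]; linarith
      have e1 : 0 ≤ be * TI t * (N t - S t) :=
        mul_nonneg (mul_nonneg hbe.le p3) (by linarith)
      linarith only [e1]
    rw [hDVdef, hVdef]
    dsimp only
    linarith only [hfrac,
      mul_nonneg (show 0 ≤ (d + k1) - b * k1 - c by linarith) p2,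
      mul_nonneg (show 0 ≤ b * (d + dT + r) - be - c * b by linarith) p3]
  have hVdecay := TB_decay hVd hVineq
  -- TL → 0
  have hTLlim : Tendsto TL atTop (nhds 0) := by
    apply tendsto_of_tendsto_of_tendsto_of_le_of_le' tendsto_const_nhds
      (TB_exp_tendsto (V 0) c hcpos)
    · filter_upwards [eventually_ge_atTop (0:ℝ)] with t ht
      exact (hpos t ht).2.1
    · filter_upwards [eventually_ge_atTop (0:ℝ)] with t ht
      have h1 := hVdecay t ht
      have p3 := (hpos t ht).2.2.1
      have hVt : V t = TL t + b * TI t := by rw [hVdef]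
      linarith only [h1, hVt, mul_nonneg hbpos.le p3]
  -- TI → 0
  have hTIlim : Tendsto TI atTop (nhds 0) := by
    apply tendsto_of_tendsto_of_tendsto_of_le_of_le' tendsto_const_nhds
      (TB_exp_tendsto (V 0 / b) c hcpos)
    · filter_upwards [eventually_ge_atTop (0:ℝ)] with t ht
      exact (hpos t ht).2.2.1
    · filter_upwards [eventually_ge_atTop (0:ℝ)] with t ht
      have h1 := hVdecay t ht
      have p2 := (hpos t ht).2.1
      have hVt : V t = TL t + b * TI t := by rw [hVdef]
      rw [div_mul_eq_mul_div, le_div_iff₀ hbpos]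
      linarith only [h1, hVt, p2]
  -- TT → 0
  have hTTlim : Tendsto TT atTop (nhds 0) := by
    have hf : Tendsto (fun t => r * TI t) atTop (nhds 0) := by
      simpa using hTIlim.const_mul r
    have := TB_linear_limit (a := r1 + d + dT) (L := 0) (by linarith)
      (fun t ht => hTT t ht) hf
    simpa using this
  -- N → Lam / d
  have hNlim : Tendsto N atTop (nhds (Lam / d)) := by
    apply TB_linear_limit (f := fun t => Lam - dT * (TI t + TT t)) (a := d) (L := Lam) hd ?_ ?_
    · intro t ht
      have := hDN t ht
      convert this using 1
      ring
    · have h1 := ((hTIlim.add hTTlim).const_mul dT).const_sub Lam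
      simpa using h1
  -- S → Lam / d
  have hSlim : Tendsto S atTop (nhds (Lam / d)) := by
    have hfun : S = fun t => N t - TL t - TI t - TT t := by
      funext t; rw [hN t]; ring
    rw [hfun]
    have h1 := ((hNlim.sub hTLlim).sub hTIlim).sub hTTlim
    simpa using h1
  exact ⟨hSlim, hTLlim, hTIlim, hTTlim⟩
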